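/- Let G be a signed complete graph whose vertices each have one of |𝒞| colors c₁,…,c_{|𝒞|}, with |V_{c_i}| = p_i·|V_{c₁}| for positive integers p_i (i ≥ 2), and let C be a clustering of G in which every cluster has color distribution equal to the global distribution. Then for each i ≥ 2 there exists a b-matching M_i from V_{c_i} to V_{c₁} (each c₁-vertex matched to exactly p_i vertices of color c_i, each c_i-vertex matched once) with matched pairs in the same cluster of C, satisfying weight(M_i) ≤ 2·p_i·d(C), where d(C) is the number of disagreements of C. -/

import Mathlib

open Finset

/-- An edge `{u,v}` is a disagreement of clustering `c`: negative inside a cluster,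
or positive between clusters. `sign u v = true` means positive. -/
def isDis {V : Type*} (sign : V → V → Bool) (c : V → ℕ) (u v : V) : Bool :=
  if c u = c v then !(sign u v) else sign u v

/-- Number of disagreements of a clustering (unordered edges). -/
def numDis {V : Type*} [Fintype V] [DecidableEq V] (sign : V → V → Bool) (c : V → ℕ) : ℕ :=
  ((Finset.univ : Finset (V × V)).filter
    (fun p => p.1 ≠ p.2 ∧ isDis sign c p.1 p.2 = true)).card / 2

/-- Weight of a matched pair `(u,v)`: number of vertices `w ≠ u,v` on which the
signs to `u` and `v` differ, plus `1` if `(u,v)` is negative. -/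
def pairW {V : Type*} [Fintype V] [DecidableEq V] (sign : V → V → Bool) (u v : V) : ℕ :=
  ((Finset.univ : Finset V).filter
    (fun w => w ≠ u ∧ w ≠ v ∧ sign u w ≠ sign v w)).card
  + (if sign u v = false then 1 else 0)

/- auxiliary lemmas -/

lemma isDis_symm {V : Type*} (sign : V → V → Bool) (hsym : ∀ u v, sign u v = sign v u)
    (c : V → ℕ) (u v : V) : isDis sign c u v = isDis sign c v u := by
  unfold isDis
  by_cases h : c u = c v
  · simp only [if_pos h, if_pos h.symm, hsym u v]
  · simp only [if_neg h, if_neg (fun hh : c v = c u => h hh.symm), hsym u v]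

/-- assignment existence: if `A.card = n * B.card` then there is a map sending `A`
into `B` with all fibers of size `n`. -/
lemma existsAssign {V : Type*} [DecidableEq V] (n : ℕ) :
    ∀ (B A : Finset V), A.card = n * B.card →
      ∃ g : V → V, (∀ a ∈ A, g a ∈ B) ∧
        ∀ b ∈ B, (A.filter fun a => g a = b).card = n := by
  intro B
  induction B using Finset.induction_on with
  | empty =>
    intro A h
    refine ⟨id, ?_, ?_⟩
    · intro a ha
      simp only [mul_zero, Finset.card_empty] at h
      rw [Finset.card_eq_zero.mp h] at ha
      simp at ha
    · intro b hb; simp at hb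
  | insert _ _ hb ih =>
    rename_i b s
    intro A h
    rw [Finset.card_insert_of_notMem hb, Nat.mul_add, Nat.mul_one] at h
    have hn : n ≤ A.card := by omega
    obtain ⟨S, hS, hScard⟩ := Finset.exists_subset_card_eq hn
    have hdiff : (A \ S).card = n * s.card := by
      rw [Finset.card_sdiff_of_subset hS, hScard, h]; omega
    obtain ⟨g', hg'1, hg'2⟩ := ih (A \ S) hdiff
    refine ⟨fun a => if a ∈ S then b else g' a, ?_, ?_⟩
    · intro a ha
      by_cases hs' : a ∈ S
      · simp [hs']
      · have : a ∈ A \ S := Finset.mem_sdiff.mpr ⟨ha, hs'⟩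
        simp only [hs', if_false]
        exact Finset.mem_insert_of_mem (hg'1 a this)
    · intro b' hb'
      rcases Finset.mem_insert.mp hb' with rfl | hb's
      · have : (A.filter fun a => (if a ∈ S then b' else g' a) = b') = S := by
          ext a
          simp only [Finset.mem_filter]
          constructor
          · rintro ⟨ha, hfa⟩
            by_contra hs'
            rw [if_neg hs'] at hfa
            have := hg'1 a (Finset.mem_sdiff.mpr ⟨ha, hs'⟩)
            rw [hfa] at this
            exact hb this
          · intro hs'
            exact ⟨hS hs', by rw [if_pos hs']⟩
        rw [this, hScard]
      · have hbne : b ≠ b' := by rintro rfl; exact hb hb's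
        have : (A.filter fun a => (if a ∈ S then b else g' a) = b')
            = ((A \ S).filter fun a => g' a = b') := by
          ext a
          simp only [Finset.mem_filter, Finset.mem_sdiff]
          constructor
          · rintro ⟨ha, hfa⟩
            by_cases hs' : a ∈ S
            · rw [if_pos hs'] at hfa; exact absurd hfa hbne
            · rw [if_neg hs'] at hfa; exact ⟨⟨ha, hs'⟩, hfa⟩
          · rintro ⟨⟨ha, hs'⟩, hfa⟩
            exact ⟨ha, by rw [if_neg hs']; exact hfa⟩
        rw [this, hg'2 b' hb's]

/-- degree of a vertex in the disagreement graph -/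
noncomputable def disDeg {V : Type*} [Fintype V] [DecidableEq V]
    (sign : V → V → Bool) (c : V → ℕ) (u : V) : ℕ :=
  ((Finset.univ : Finset V).filter (fun w => w ≠ u ∧ isDis sign c u w = true)).card

lemma pairW_le_disDeg {V : Type*} [Fintype V] [DecidableEq V]
    (sign : V → V → Bool) (hsym : ∀ u v, sign u v = sign v u) (c : V → ℕ)
    (u v : V) (hne : u ≠ v) (hcc : c u = c v) :
    pairW sign u v ≤ disDeg sign c u + disDeg sign c v := by
  classical
  set D := (Finset.univ : Finset V).filter
    (fun w => w ≠ u ∧ w ≠ v ∧ sign u w ≠ sign v w) with hD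
  set Du' := (Finset.univ : Finset V).filter
    (fun w => w ≠ u ∧ w ≠ v ∧ isDis sign c u w = true) with hDu'
  set Dv' := (Finset.univ : Finset V).filter
    (fun w => w ≠ u ∧ w ≠ v ∧ isDis sign c v w = true) with hDv'
  have hsub : D ⊆ Du' ∪ Dv' := by
    intro w hw
    simp only [hD, Finset.mem_filter, Finset.mem_univ, true_and] at hw
    obtain ⟨h1, h2, h3⟩ := hw
    have hkey : isDis sign c u w = true ∨ isDis sign c v w = true := by
      unfold isDis
      by_cases hc : c u = c w
      · rw [if_pos hc, if_pos (hcc ▸ hc)]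
        cases hu : sign u w <;> cases hv : sign v w <;> simp_all
      · rw [if_neg hc, if_neg (fun hh => hc (hcc.trans hh))]
        cases hu : sign u w <;> cases hv : sign v w <;> simp_all
    rcases hkey with hk | hk
    · exact Finset.mem_union_left _ (by simp [hDu', h1, h2, hk])
    · exact Finset.mem_union_right _ (by simp [hDv', h1, h2, hk])
  have hDcard : D.card ≤ Du'.card + Dv'.card :=
    (Finset.card_le_card hsub).trans (Finset.card_union_le _ _)
  have hDu'le : Du' ⊆ (Finset.univ : Finset V).filter
      (fun w => w ≠ u ∧ isDis sign c u w = true) := by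
    intro w hw
    simp only [hDu', Finset.mem_filter, Finset.mem_univ, true_and] at hw ⊢
    exact ⟨hw.1, hw.2.2⟩
  have hDv'le : Dv' ⊆ (Finset.univ : Finset V).filter
      (fun w => w ≠ v ∧ isDis sign c v w = true) := by
    intro w hw
    simp only [hDv', Finset.mem_filter, Finset.mem_univ, true_and] at hw ⊢
    exact ⟨hw.2.1, hw.2.2⟩
  unfold pairW disDeg
  by_cases hs : sign u v = false
  · -- the edge uv is itself a disagreement
    have hdisuv : isDis sign c u v = true := by unfold isDis; simp [hcc, hs]
    have hvmem : v ∈ (Finset.univ : Finset V).filter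
        (fun w => w ≠ u ∧ isDis sign c u w = true) := by
      simp [hne.symm, hdisuv]
    have hvnot : v ∉ Du' := by simp [hDu']
    have hins : insert v Du' ⊆ (Finset.univ : Finset V).filter
        (fun w => w ≠ u ∧ isDis sign c u w = true) := by
      intro w hw
      rcases Finset.mem_insert.mp hw with rfl | hw
      · exact hvmem
      · exact hDu'le hw
    have h1 : Du'.card + 1 ≤ ((Finset.univ : Finset V).filter
        (fun w => w ≠ u ∧ isDis sign c u w = true)).card := by
      have := Finset.card_le_card hins
      rw [Finset.card_insert_of_notMem hvnot] at this
      omega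
    rw [if_pos hs]
    calc D.card + 1 ≤ (Du'.card + 1) + Dv'.card := by omega
      _ ≤ _ := Nat.add_le_add h1 (Finset.card_le_card hDv'le)
  · rw [if_neg hs, add_zero]
    exact hDcard.trans (Nat.add_le_add (Finset.card_le_card hDu'le)
      (Finset.card_le_card hDv'le))

lemma sum_disDeg {V : Type*} [Fintype V] [DecidableEq V]
    (sign : V → V → Bool) (hsym : ∀ u v, sign u v = sign v u) (c : V → ℕ) :
    ∑ u, disDeg sign c u = 2 * numDis sign c := by
  classical
  set T := ((Finset.univ : Finset (V × V)).filter
    (fun p => p.1 ≠ p.2 ∧ isDis sign c p.1 p.2 = true)) with hT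
  have hsumT : T.card = ∑ u, disDeg sign c u := by
    rw [Finset.card_eq_sum_card_fiberwise
      (f := Prod.fst) (t := Finset.univ) (fun x _ => Finset.mem_univ _)]
    refine Finset.sum_congr rfl (fun u _ => ?_)
    unfold disDeg
    apply Finset.card_bij (fun p _ => p.2)
    · intro p hp
      simp only [hT, Finset.mem_filter, Finset.mem_univ, true_and] at hp
      simp only [Finset.mem_filter, Finset.mem_univ, true_and]
      obtain ⟨⟨h1, h2⟩, h3⟩ := hp
      rw [h3] at h1 h2
      exact ⟨Ne.symm h1, h2⟩
    · intro p hp q hq hpq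
      simp only [hT, Finset.mem_filter] at hp hq
      exact Prod.ext (hp.2.trans hq.2.symm) hpq
    · intro w hw
      simp only [Finset.mem_filter, Finset.mem_univ, true_and] at hw
      exact ⟨(u, w), by simp [hT, Ne.symm hw.1, hw.2], rfl⟩
  -- evenness of T.card via the swap involution
  have hswap : ∀ p : V × V, p ∈ T → Prod.swap p ∈ T := by
    intro p hp
    simp only [hT, Finset.mem_filter, Finset.mem_univ, true_and, Prod.fst_swap,
      Prod.snd_swap] at hp ⊢
    exact ⟨Ne.symm hp.1, (isDis_symm sign hsym c _ _).symm ▸ hp.2⟩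
  have heven : T.card % 2 = 0 := by
    set e := Fintype.equivFin V with he
    set T1 := T.filter (fun p => e p.1 < e p.2) with hT1
    set T2 := T.filter (fun p => e p.2 < e p.1) with hT2
    have hunion : T = T1 ∪ T2 := by
      ext p
      simp only [hT1, hT2, Finset.mem_union, Finset.mem_filter]
      constructor
      · intro hp
        have hne : p.1 ≠ p.2 := by
          simp only [hT, Finset.mem_filter] at hp; exact hp.2.1
        have : e p.1 ≠ e p.2 := fun h => hne (e.injective h)
        rcases lt_or_gt_of_ne this with h | h
        · exact Or.inl ⟨hp, h⟩
        · exact Or.inr ⟨hp, h⟩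
      · rintro (⟨hp, _⟩ | ⟨hp, _⟩) <;> exact hp
    have hdisj : Disjoint T1 T2 := by
      rw [Finset.disjoint_filter]
      intro p _ h1 h2
      exact absurd h1 (not_lt.mpr h2.le)
    have himg : T2 = T1.image Prod.swap := by
      ext p
      simp only [hT1, hT2, Finset.mem_image, Finset.mem_filter]
      constructor
      · intro ⟨hp, hlt⟩
        exact ⟨Prod.swap p, ⟨hswap p hp, by simpa using hlt⟩, Prod.swap_swap p⟩
      · rintro ⟨q, ⟨hq, hlt⟩, rfl⟩
        exact ⟨hswap q hq, by simpa using hlt⟩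
    have hcard2 : T2.card = T1.card := by
      rw [himg, Finset.card_image_of_injective _ Prod.swap_injective]
    rw [hunion, Finset.card_union_of_disjoint hdisj, hcard2]
    omega
  rw [← hsumT]
  unfold numDis
  rw [← hT]
  omega

/-- multi-color version — for a clustering with the global color
distribution in each cluster, for every non-base color there is a b-matching to
the base color, inside clusters, of weight at most 2·p_i·d(C). -/
theorem stmt15 {V : Type*} [Fintype V] [DecidableEq V]
    (sign : V → V → Bool) (hsym : ∀ u v, sign u v = sign v u)
    (m : ℕ) (hm : 0 < m) (col : V → Fin m) (p : Fin m → ℕ) (hp : ∀ i, 1 ≤ p i)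
    (c : V → ℕ)
    (hglob : ∀ i : Fin m, i ≠ ⟨0, hm⟩ →
      (univ.filter fun v => col v = i).card
        = p i * (univ.filter fun v => col v = (⟨0, hm⟩ : Fin m)).card)
    (hfair : ∀ (i : Fin m), i ≠ ⟨0, hm⟩ → ∀ k,
      (univ.filter fun v => col v = i ∧ c v = k).card
        = p i * (univ.filter fun v => col v = (⟨0, hm⟩ : Fin m) ∧ c v = k).card) :
    ∀ i : Fin m, i ≠ ⟨0, hm⟩ →
      ∃ f : V → V,
        (∀ u, col u = i → col (f u) = ⟨0, hm⟩) ∧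
        (∀ r, col r = ⟨0, hm⟩ →
          (univ.filter fun u => col u = i ∧ f u = r).card = p i) ∧
        (∀ u, col u = i → c (f u) = c u) ∧
        ∑ u ∈ univ.filter (fun v => col v = i), pairW sign u (f u)
          ≤ 2 * p i * numDis sign c := by
  classical
  intro i hi
  set base : Fin m := ⟨0, hm⟩ with hbase
  -- per-cluster sets
  set A : ℕ → Finset V := fun k => univ.filter (fun v => col v = i ∧ c v = k) with hA
  set B : ℕ → Finset V := fun k => univ.filter (fun v => col v = base ∧ c v = k) with hB
  have hcard : ∀ k, (A k).card = p i * (B k).card := fun k => hfair i hi k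
  -- choose per-cluster assignments
  have hex : ∀ k, ∃ g : V → V, (∀ a ∈ A k, g a ∈ B k) ∧
      ∀ b ∈ B k, ((A k).filter fun a => g a = b).card = p i :=
    fun k => existsAssign (p i) (B k) (A k) (hcard k)
  choose g hg1 hg2 using hex
  set f : V → V := fun u => if col u = i then g (c u) u else u with hf
  have hfmem : ∀ u, col u = i → f u ∈ B (c u) := by
    intro u hu
    have : u ∈ A (c u) := by simp [hA, hu]
    simp only [hf, if_pos hu]
    exact hg1 (c u) u this
  have hfcol : ∀ u, col u = i → col (f u) = base := by
    intro u hu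
    have := hfmem u hu
    simp only [hB, Finset.mem_filter] at this
    exact this.2.1
  have hfc : ∀ u, col u = i → c (f u) = c u := by
    intro u hu
    have := hfmem u hu
    simp only [hB, Finset.mem_filter] at this
    exact this.2.2
  refine ⟨f, hfcol, ?_, hfc, ?_⟩
  · -- fiber sizes
    intro r hr
    have hrB : r ∈ B (c r) := by simp [hB, hr]
    have : (univ.filter fun u => col u = i ∧ f u = r)
        = ((A (c r)).filter fun a => g (c r) a = r) := by
      ext u
      simp only [hA, Finset.mem_filter, Finset.mem_univ, true_and]
      constructor
      · rintro ⟨hu, hfu⟩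
        have hc : c (f u) = c u := hfc u hu
        rw [hfu] at hc
        refine ⟨⟨hu, hc.symm⟩, ?_⟩
        simpa only [hf, if_pos hu, ← hc] using hfu
      · rintro ⟨⟨hu, hcu⟩, hgu⟩
        refine ⟨hu, ?_⟩
        simp only [hf, if_pos hu, hcu]
        exact hgu
    rw [this, hg2 (c r) r hrB]
  · -- the weight bound
    set Ai := univ.filter (fun v => col v = i) with hAi
    set Bb := univ.filter (fun v => col v = base) with hBb
    have hneq : ∀ u ∈ Ai, u ≠ f u := by
      intro u hu
      simp only [hAi, Finset.mem_filter] at hu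
      intro h
      apply hi
      rw [← hu.2, h, hfcol u hu.2]
    have hstep1 : ∑ u ∈ Ai, pairW sign u (f u)
        ≤ ∑ u ∈ Ai, (disDeg sign c u + disDeg sign c (f u)) := by
      refine Finset.sum_le_sum (fun u hu => ?_)
      have hui : col u = i := by simpa [hAi] using (Finset.mem_filter.mp hu).2
      exact pairW_le_disDeg sign hsym c u (f u) (hneq u hu) (hfc u hui).symm
    rw [Finset.sum_add_distrib] at hstep1
    -- regroup the second sum by fibers
    have hmaps : ∀ u ∈ Ai, f u ∈ Bb := by
      intro u hu
      have hui : col u = i := by simpa [hAi] using (Finset.mem_filter.mp hu).2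
      simp [hBb, hfcol u hui]
    have hstep2 : ∑ u ∈ Ai, disDeg sign c (f u)
        = ∑ r ∈ Bb, p i * disDeg sign c r := by
      rw [← Finset.sum_fiberwise_of_maps_to hmaps (fun u => disDeg sign c (f u))]
      refine Finset.sum_congr rfl (fun r hr => ?_)
      have hrb : col r = base := by simpa [hBb] using (Finset.mem_filter.mp hr).2
      have hfib : (Ai.filter fun u => f u = r).card = p i := by
        have : (Ai.filter fun u => f u = r)
            = univ.filter fun u => col u = i ∧ f u = r := by
          simp [hAi, Finset.filter_filter]
        rw [this]
        -- reuse the fiber-size result proven above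
        have hrB : r ∈ B (c r) := by simp [hB, hrb]
        have heq : (univ.filter fun u => col u = i ∧ f u = r)
            = ((A (c r)).filter fun a => g (c r) a = r) := by
          ext u
          simp only [hA, Finset.mem_filter, Finset.mem_univ, true_and]
          constructor
          · rintro ⟨hu, hfu⟩
            have hc : c (f u) = c u := hfc u hu
            rw [hfu] at hc
            refine ⟨⟨hu, hc.symm⟩, ?_⟩
            simpa only [hf, if_pos hu, ← hc] using hfu
          · rintro ⟨⟨hu, hcu⟩, hgu⟩
            refine ⟨hu, ?_⟩
            simp only [hf, if_pos hu, hcu]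
            exact hgu
        rw [heq, hg2 (c r) r hrB]
      calc ∑ u ∈ Ai.filter (fun u => f u = r), disDeg sign c (f u)
          = ∑ u ∈ Ai.filter (fun u => f u = r), disDeg sign c r := by
            refine Finset.sum_congr rfl (fun u hu => ?_)
            have : f u = r := (Finset.mem_filter.mp hu).2
            rw [this]
        _ = p i * disDeg sign c r := by rw [Finset.sum_const, hfib, smul_eq_mul]
    rw [hstep2, ← Finset.mul_sum] at hstep1
    -- now combine
    have hdisjAB : Disjoint Ai Bb := by
      rw [Finset.disjoint_filter]
      intro u _ hu hb
      exact hi (hu ▸ hb ▸ rfl)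
    have hsub : Ai ∪ Bb ⊆ univ := Finset.subset_univ _
    have hbound : ∑ u ∈ Ai, disDeg sign c u + ∑ r ∈ Bb, disDeg sign c r
        ≤ 2 * numDis sign c := by
      rw [← Finset.sum_union hdisjAB]
      calc ∑ u ∈ Ai ∪ Bb, disDeg sign c u ≤ ∑ u, disDeg sign c u :=
            Finset.sum_le_sum_of_subset hsub
        _ = 2 * numDis sign c := sum_disDeg sign hsym c
    have hp1 : 1 ≤ p i := hp i
    calc ∑ u ∈ Ai, pairW sign u (f u)
        ≤ ∑ u ∈ Ai, disDeg sign c u + p i * ∑ r ∈ Bb, disDeg sign c r := hstep1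
      _ ≤ p i * (∑ u ∈ Ai, disDeg sign c u + ∑ r ∈ Bb, disDeg sign c r) := by
          rw [Nat.mul_add]
          exact Nat.add_le_add (Nat.le_mul_of_pos_left _ hp1) le_rfl
      _ ≤ p i * (2 * numDis sign c) := Nat.mul_le_mul_left _ hbound
      _ = 2 * p i * numDis sign c := by ring
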